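/- Let R > 0, M > 0, and let D = {z ∈ ℂ : |z| < R}. Suppose u : closure(D) → ℝ is continuous, twice continuously differentiable on D, satisfies Δu = 8·sinh(2u) on D, and 0 ≤ u ≤ M on closure(D). Then for every γ with 0 < γ < 4 there exists a constant K > 0, depending only on γ and M (and not on R or u), such that |u(z)| ≤ K·e^{−γ·(R−|z|)} for all z ∈ D. -/

import Mathlib

open Set Filter Topology Complex

/-- Directional derivative of `f : ℂ → E` at `z` in the direction `v ∈ ℂ`. -/
noncomputable def dirDeriv {E : Type*} [NormedAddCommGroup E] [NormedSpace ℝ E]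
    (v : ℂ) (f : ℂ → E) (z : ℂ) : E :=
  deriv (fun t : ℝ => f (z + t • v)) 0

/-- The flat Laplacian `Δf = ∂²f/∂x² + ∂²f/∂y²` of a function on `ℂ ≅ ℝ²`
(applied componentwise when the target is `ℂ`). -/
noncomputable def flatLaplacian {E : Type*} [NormedAddCommGroup E] [NormedSpace ℝ E]
    (f : ℂ → E) (z : ℂ) : E :=
  dirDeriv 1 (dirDeriv 1 f) z + dirDeriv Complex.I (dirDeriv Complex.I f) z

lemma dirDeriv_line (f : ℂ → ℝ) (v z : ℂ) (t : ℝ) :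
    dirDeriv v f (z + t • v) = deriv (fun s : ℝ => f (z + s • v)) t := by
  unfold dirDeriv
  have h : (fun s : ℝ => f (z + t • v + s • v)) = fun s : ℝ => f (z + (t + s) • v) := by
    funext s
    rw [add_smul, ← add_assoc]
  rw [h]
  simpa using deriv_comp_const_add (fun s : ℝ => f (z + s • v)) t 0

lemma flatLaplacian_line (f : ℂ → ℝ) (z v : ℂ) :
    dirDeriv v (dirDeriv v f) z = deriv (deriv (fun t : ℝ => f (z + t • v))) 0 := by
  have h : (fun t : ℝ => dirDeriv v f (z + t • v)) = deriv (fun s : ℝ => f (z + s • v)) :=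
    funext (dirDeriv_line f v z)
  show deriv (fun t : ℝ => dirDeriv v f (z + t • v)) 0 = _
  rw [h]

lemma second_deriv_test {g : ℝ → ℝ} (hmax : IsLocalMax g 0)
    (hg : ∀ᶠ t in 𝓝 (0:ℝ), DifferentiableAt ℝ g t)
    (hg' : DifferentiableAt ℝ (deriv g) 0) :
    deriv (deriv g) 0 ≤ 0 := by
  by_contra hpos
  push_neg at hpos
  have h0 : deriv g 0 = 0 := hmax.deriv_eq_zero
  have hd : HasDerivAt (deriv g) (deriv (deriv g) 0) 0 := hg'.hasDerivAt
  have hslope : Tendsto (slope (deriv g) 0) (𝓝[≠] 0) (𝓝 (deriv (deriv g) 0)) :=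
    hasDerivAt_iff_tendsto_slope.1 hd
  have hsub : 𝓝[>] (0:ℝ) ≤ 𝓝[≠] (0:ℝ) :=
    nhdsWithin_mono _ (fun x hx => ne_of_gt hx)
  have hev : ∀ᶠ t in 𝓝[>] (0:ℝ), 0 < slope (deriv g) 0 t :=
    (hslope.mono_left hsub).eventually_const_lt hpos
  have hev2 : ∀ᶠ t in 𝓝[>] (0:ℝ), 0 < deriv g t := by
    filter_upwards [hev, self_mem_nhdsWithin] with t ht ht0
    have hts : slope (deriv g) 0 t = deriv g t / t := by
      simp [slope_def_field, h0]
    rw [hts] at ht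
    have := mul_pos ht (show (0:ℝ) < t from ht0)
    rwa [div_mul_cancel₀ _ (ne_of_gt ht0)] at this
  have hev2' : ∀ᶠ t in 𝓝 (0:ℝ), t ∈ Ioi (0:ℝ) → 0 < deriv g t :=
    eventually_nhdsWithin_iff.1 hev2
  obtain ⟨δ, hδ, H⟩ := Metric.eventually_nhds_iff.1 ((hg.and hmax).and hev2')
  set b : ℝ := δ / 2 with hbdef
  have hb : 0 < b := by positivity
  have hmem : ∀ x ∈ Icc (0:ℝ) b, dist x 0 < δ := by
    intro x hx
    rw [Real.dist_eq, sub_zero, _root_.abs_of_nonneg hx.1]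
    linarith [hx.2]
  have hmono : StrictMonoOn g (Icc (0:ℝ) b) := by
    apply strictMonoOn_of_deriv_pos (convex_Icc 0 b)
    · intro x hx
      exact ((H (hmem x hx)).1.1).continuousAt.continuousWithinAt
    · intro x hx
      rw [interior_Icc] at hx
      exact (H (hmem x ⟨le_of_lt hx.1, le_of_lt hx.2⟩)).2 hx.1
  have h1 : g 0 < g b := hmono (left_mem_Icc.2 hb.le) (right_mem_Icc.2 hb.le) hb
  have h2 : g b ≤ g 0 := (H (hmem b (right_mem_Icc.2 hb.le))).1.2
  linarith

lemma exists_good_dir (N : ℕ) (hN : 1 ≤ N) (ζ : ℂ) :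
    ∃ k : ℕ, k < N ∧ Real.cos (Real.pi / N) * ‖ζ‖ ≤
      ((starRingEnd ℂ) (Complex.exp (2 * Real.pi * k / N * Complex.I)) * ζ).re := by
  have hNR : (1:ℝ) ≤ (N:ℝ) := by exact_mod_cast hN
  have hNpos : (0:ℝ) < N := by linarith
  by_cases hζ : ζ = 0
  · exact ⟨0, hN, by simp [hζ]⟩
  set φ := Complex.arg ζ with hφ
  set k0 : ℤ := round (φ * N / (2 * Real.pi)) with hk0
  have hNz : (0:ℤ) < (N:ℤ) := by exact_mod_cast hN
  have hnn : 0 ≤ k0 % (N:ℤ) := Int.emod_nonneg k0 hNz.ne'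
  have hlt : k0 % (N:ℤ) < (N:ℤ) := Int.emod_lt_of_pos k0 hNz
  refine ⟨(k0 % (N:ℤ)).toNat, by omega, ?_⟩
  set k : ℕ := (k0 % (N:ℤ)).toNat with hk
  have hkr : ((k:ℝ)) = ((k0 % (N:ℤ) : ℤ) : ℝ) := by
    exact_mod_cast congrArg (fun n : ℤ => (n : ℝ)) (Int.toNat_of_nonneg hnn)
  set α : ℝ := 2 * Real.pi * k0 / N with hα
  set q : ℤ := k0 / (N:ℤ) with hq
  have hexp : Complex.exp (2 * Real.pi * k / N * Complex.I) = Complex.exp (α * Complex.I) := by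
    have hcast : (2 * (Real.pi:ℂ) * k / N * Complex.I)
        = ((2 * Real.pi * k / N : ℝ) : ℂ) * Complex.I := by
      push_cast; ring
    have hmod : (k0 % (N:ℤ)) = k0 - (N:ℤ) * q := Int.emod_def k0 (N:ℤ)
    have harg : (2 * Real.pi * k / N : ℝ) = α - (q:ℝ) * (2 * Real.pi) := by
      rw [hkr, hmod, hα]
      push_cast
      field_simp
    rw [hcast, harg]
    push_cast
    rw [sub_mul, Complex.exp_sub]
    rw [show ((q:ℂ) * (2 * (Real.pi:ℂ)) * Complex.I)
        = (q:ℂ) * (2 * (Real.pi:ℂ) * Complex.I) by ring]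
    rw [Complex.exp_int_mul_two_pi_mul_I]
    simp
  rw [hexp]
  have hζeq : ζ = (‖ζ‖ : ℂ) * Complex.exp (φ * Complex.I) :=
    (Complex.norm_mul_exp_arg_mul_I ζ).symm
  have hconj : (starRingEnd ℂ) (Complex.exp (α * Complex.I))
      = Complex.exp (-(α:ℂ) * Complex.I) := by
    rw [← Complex.exp_conj]
    congr 1
    rw [map_mul, Complex.conj_ofReal, Complex.conj_I]
    ring
  have hre : ((starRingEnd ℂ) (Complex.exp (α * Complex.I)) * ζ).re
      = ‖ζ‖ * Real.cos (φ - α) := by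
    rw [hconj]
    conv_lhs => rw [hζeq]
    rw [mul_left_comm, ← Complex.exp_add]
    have harg2 : -(α:ℂ) * Complex.I + (φ:ℂ) * Complex.I = ((φ - α : ℝ) : ℂ) * Complex.I := by
      push_cast; ring
    rw [harg2, Complex.re_ofReal_mul, Complex.exp_ofReal_mul_I_re]
  rw [hre]
  have hround : |φ * N / (2 * Real.pi) - k0| ≤ 1 / 2 := abs_sub_round _
  have hpi := Real.pi_pos
  have hangle : |φ - α| ≤ Real.pi / N := by
    have hexpand : φ - α = (φ * N / (2 * Real.pi) - k0) * (2 * Real.pi / N) := by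
      rw [hα]
      field_simp
    rw [hexpand, abs_mul, abs_of_pos (by positivity : (0:ℝ) < 2 * Real.pi / N)]
    calc |φ * N / (2 * Real.pi) - k0| * (2 * Real.pi / N)
        ≤ (1/2) * (2 * Real.pi / N) := by
          apply mul_le_mul_of_nonneg_right hround (by positivity)
      _ = Real.pi / N := by ring
  have hcos : Real.cos (Real.pi / N) ≤ Real.cos (φ - α) := by
    rw [← Real.cos_abs (φ - α)]
    apply Real.cos_le_cos_of_nonneg_of_le_pi (abs_nonneg _) _ hangle
    calc Real.pi / N ≤ Real.pi / 1 := by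
          apply div_le_div_of_nonneg_left hpi.le one_pos hNR
      _ ≤ Real.pi := by simp
  calc Real.cos (Real.pi / N) * ‖ζ‖ ≤ Real.cos (φ - α) * ‖ζ‖ :=
        mul_le_mul_of_nonneg_right hcos (norm_nonneg ζ)
    _ = ‖ζ‖ * Real.cos (φ - α) := by ring

lemma hasDerivAt_exp_line (n : ℕ) (c : ℝ) (A B : ℕ → ℝ) (t : ℝ) :
    HasDerivAt (fun t : ℝ => c * ∑ k ∈ Finset.range n, Real.exp (A k + t * B k))
      (c * ∑ k ∈ Finset.range n, B k * Real.exp (A k + t * B k)) t := by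
  apply HasDerivAt.const_mul
  apply HasDerivAt.fun_sum
  intro k _
  have h : HasDerivAt (fun t : ℝ => A k + t * B k) (B k) t :=
    (hasDerivAt_mul_const (B k)).const_add (A k)
  simpa [mul_comm] using h.exp

lemma deriv_exp_line (n : ℕ) (c : ℝ) (A B : ℕ → ℝ) :
    deriv (fun t : ℝ => c * ∑ k ∈ Finset.range n, Real.exp (A k + t * B k))
      = fun t : ℝ => c * ∑ k ∈ Finset.range n, B k * Real.exp (A k + t * B k) :=
  funext fun t => (hasDerivAt_exp_line n c A B t).deriv

lemma hasDerivAt_exp_line2 (n : ℕ) (c : ℝ) (A B : ℕ → ℝ) (t : ℝ) :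
    HasDerivAt (fun t : ℝ => c * ∑ k ∈ Finset.range n, B k * Real.exp (A k + t * B k))
      (c * ∑ k ∈ Finset.range n, B k ^ 2 * Real.exp (A k + t * B k)) t := by
  apply HasDerivAt.const_mul
  have h : ∀ k ∈ Finset.range n, HasDerivAt (fun t : ℝ => B k * Real.exp (A k + t * B k))
      (B k ^ 2 * Real.exp (A k + t * B k)) t := by
    intro k _
    have h : HasDerivAt (fun t : ℝ => A k + t * B k) (B k) t :=
      (hasDerivAt_mul_const (B k)).const_add (A k)
    have h2 := h.exp.const_mul (B k)
    refine h2.congr_deriv ?_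
    ring
  exact HasDerivAt.fun_sum h

lemma deriv2_exp_line (n : ℕ) (c : ℝ) (A B : ℕ → ℝ) :
    deriv (deriv (fun t : ℝ => c * ∑ k ∈ Finset.range n, Real.exp (A k + t * B k))) 0
      = c * ∑ k ∈ Finset.range n, B k ^ 2 * Real.exp (A k) := by
  rw [deriv_exp_line]
  rw [(hasDerivAt_exp_line2 n c A B 0).deriv]
  congr 1
  apply Finset.sum_congr rfl
  intro k _
  rw [zero_mul, add_zero]

/-- decay estimate for the density `u`: if `Δu = 8 sinh(2u)` on the
disk `{|z| < R}` and `0 ≤ u ≤ M` on its closure, then for every `0 < γ < 4` there is a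
constant `K = K(γ, M) > 0`, independent of `R` and `u`, with
`|u(z)| ≤ K e^{−γ(R−|z|)}` on the disk. -/
theorem statement8 (M γ : ℝ) (hM : 0 < M) (hγ0 : 0 < γ) (hγ4 : γ < 4) :
    ∃ K > (0 : ℝ), ∀ (R : ℝ), 0 < R → ∀ u : ℂ → ℝ,
      ContinuousOn u (Metric.closedBall (0 : ℂ) R) →
      ContDiffOn ℝ 2 u (Metric.ball (0 : ℂ) R) →
      (∀ z ∈ Metric.ball (0 : ℂ) R, flatLaplacian u z = 8 * Real.sinh (2 * u z)) →
      (∀ z ∈ Metric.closedBall (0 : ℂ) R, 0 ≤ u z ∧ u z ≤ M) →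
      ∀ z ∈ Metric.ball (0 : ℂ) R,
        |u z| ≤ K * Real.exp (-γ * (R - ‖z‖)) := by
  have hs2 : (0:ℝ) < (4 - γ)/2 := by linarith
  set s : ℝ := Real.sqrt ((4 - γ)/2) with hsdef
  have hs : 0 < s := Real.sqrt_pos.2 hs2
  set N : ℕ := ⌈Real.pi / s⌉₊ + 1 with hNdef
  have hN1 : 1 ≤ N := Nat.le_add_left 1 _
  have hNR : (1:ℝ) ≤ (N:ℝ) := by exact_mod_cast hN1
  have hNpos : (0:ℝ) < N := by linarith
  have hNge : Real.pi / s ≤ (N:ℝ) := by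
    calc Real.pi / s ≤ (⌈Real.pi / s⌉₊ : ℝ) := Nat.le_ceil _
      _ ≤ N := by exact_mod_cast Nat.le_succ _
  have hπN : Real.pi / N ≤ s := by
    rw [div_le_iff₀ hNpos]
    rw [div_le_iff₀ hs] at hNge
    linarith
  have hπNnn : 0 ≤ Real.pi / N := by positivity
  have hsq : (Real.pi / N)^2 ≤ (4-γ)/2 := by
    have h2 := Real.sq_sqrt hs2.le
    nlinarith
  have hγb : γ ≤ 4 * Real.cos (Real.pi / N) := by
    have h1 := Real.one_sub_sq_div_two_le_cos (x := Real.pi / N)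
    linarith
  set b : ℝ := 4 * Real.cos (Real.pi / N) with hbdef
  have hbpos : 0 < b := by linarith
  refine ⟨(N:ℝ) * M, mul_pos hNpos hM, ?_⟩
  intro R hR u hucont huC2 hulap hubd z0 hz0
  have hz0R : ‖z0‖ < R := by
    simpa [Complex.dist_eq, sub_zero] using Metric.mem_ball.1 hz0
  set d : ℝ := R - ‖z0‖ with hddef
  have hd : 0 < d := by simp only [hddef]; linarith
  set ξ : ℕ → ℂ := fun k => Complex.exp (2 * Real.pi * k / N * Complex.I) with hξ
  set c : ℝ := M * Real.exp (-(b * d)) with hcdef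
  have hc : 0 < c := by positivity
  set w : ℂ → ℝ :=
    fun z => c * ∑ k ∈ Finset.range N,
      Real.exp ((4 * (starRingEnd ℂ) (ξ k) * (z - z0)).re) with hwdef
  have hwpos : ∀ z, 0 < w z := by
    intro z
    exact mul_pos hc (Finset.sum_pos (fun k _ => Real.exp_pos _)
      ⟨0, Finset.mem_range.2 (by omega)⟩)
  have hwcont : Continuous w := by
    apply continuous_const.mul
    apply continuous_finset_sum
    intro k _
    apply Real.continuous_exp.comp
    apply Complex.continuous_re.comp
    exact continuous_const.mul (continuous_id.sub continuous_const)
  have hsub1 : Metric.closedBall z0 d ⊆ Metric.closedBall (0:ℂ) R := by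
    intro z hz
    rw [Metric.mem_closedBall] at hz ⊢
    have h1 : dist z 0 ≤ dist z z0 + dist z0 0 := dist_triangle _ _ _
    have h2 : dist z0 0 = ‖z0‖ := by simp [Complex.dist_eq]
    simp only [hddef] at hz
    linarith
  have hsub2 : ∀ z : ℂ, dist z z0 < d → z ∈ Metric.ball (0:ℂ) R := by
    intro z hz
    rw [Metric.mem_ball]
    have h1 : dist z 0 ≤ dist z z0 + dist z0 0 := dist_triangle _ _ _
    have h2 : dist z0 0 = ‖z0‖ := by simp [Complex.dist_eq]
    simp only [hddef] at hz
    linarith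
  -- main comparison claim, by the maximum principle
  have key : ∀ z ∈ Metric.closedBall z0 d, u z ≤ w z := by
    obtain ⟨zs, hzsmem, hzsmax⟩ := (isCompact_closedBall z0 d).exists_isMaxOn
      (Metric.nonempty_closedBall.2 hd.le)
      ((hucont.mono hsub1).sub hwcont.continuousOn)
    intro z hz
    have hle : u z - w z ≤ u zs - w zs := hzsmax hz
    suffices hzs0 : u zs - w zs ≤ 0 by linarith
    rcases eq_or_lt_of_le (Metric.mem_closedBall.1 hzsmem) with heq | hlt
    · -- the maximum is on the boundary circle
      have hu_le : u zs ≤ M := (hubd zs (hsub1 hzsmem)).2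
      have hw_ge : M ≤ w zs := by
        obtain ⟨k, hkN, hk⟩ := exists_good_dir N hN1 (zs - z0)
        have habs : ‖zs - z0‖ = d := by rw [← Complex.dist_eq]; exact heq
        have h4 : b * d ≤ (4 * (starRingEnd ℂ) (ξ k) * (zs - z0)).re := by
          have he : (4 * (starRingEnd ℂ) (ξ k) * (zs - z0))
              = ((4:ℝ):ℂ) * ((starRingEnd ℂ) (ξ k) * (zs - z0)) := by
            push_cast; ring
          rw [he, Complex.re_ofReal_mul]
          rw [habs] at hk
          simp only [hbdef]
          nlinarith
        have hterm : Real.exp (b * d) ≤ ∑ k' ∈ Finset.range N,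
            Real.exp ((4 * (starRingEnd ℂ) (ξ k') * (zs - z0)).re) :=
          le_trans (Real.exp_le_exp.2 h4)
            (Finset.single_le_sum
              (f := fun k' => Real.exp ((4 * (starRingEnd ℂ) (ξ k') * (zs - z0)).re))
              (fun i _ => (Real.exp_pos _).le) (Finset.mem_range.2 hkN))
        calc M = c * Real.exp (b * d) := by
              rw [hcdef, mul_assoc, ← Real.exp_add]; simp
          _ ≤ w zs := mul_le_mul_of_nonneg_left hterm hc.le
      linarith
    · -- the maximum is interior: contradiction with the equation
      by_contra hpos0
      push_neg at hpos0
      have hzsB : zs ∈ Metric.ball (0:ℂ) R := hsub2 zs hlt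
      have hloc : IsLocalMax (fun z => u z - w z) zs :=
        hzsmax.isLocalMax (mem_nhds_iff.2 ⟨Metric.ball z0 d, Metric.ball_subset_closedBall,
          Metric.isOpen_ball, Metric.mem_ball.2 hlt⟩)
      set A : ℕ → ℝ := fun k => (4 * (starRingEnd ℂ) (ξ k) * (zs - z0)).re with hA
      have hw_line : ∀ v : ℂ, (fun t : ℝ => w (zs + t • v))
          = fun t => c * ∑ k ∈ Finset.range N,
              Real.exp (A k + t * (4 * (starRingEnd ℂ) (ξ k) * v).re) := by
        intro v
        funext t
        simp only [hwdef]
        congr 1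
        apply Finset.sum_congr rfl
        intro k _
        congr 1
        have he : 4 * (starRingEnd ℂ) (ξ k) * (zs + t • v - z0)
            = 4 * (starRingEnd ℂ) (ξ k) * (zs - z0)
              + (t:ℝ) • (4 * (starRingEnd ℂ) (ξ k) * v) := by
          rw [Complex.real_smul, Complex.real_smul]
          ring
        rw [he, Complex.add_re, hA]
        congr 1
        rw [Complex.real_smul, Complex.re_ofReal_mul]
      have hdir : ∀ v : ℂ,
          deriv (deriv (fun t : ℝ => u (zs + t • v))) 0
            ≤ c * ∑ k ∈ Finset.range N,
                (4 * (starRingEnd ℂ) (ξ k) * v).re ^ 2 * Real.exp (A k) := by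
        intro v
        set B : ℕ → ℝ := fun k => (4 * (starRingEnd ℂ) (ξ k) * v).re with hB
        set gu : ℝ → ℝ := fun t => u (zs + t • v) with hgu
        set gw : ℝ → ℝ := fun t => c * ∑ k ∈ Finset.range N, Real.exp (A k + t * B k) with hgw
        have hgweq : (fun t : ℝ => w (zs + t • v)) = gw := by
          rw [hw_line v]
        have hLv : ContDiff ℝ 2 (fun t : ℝ => zs + t • v) :=
          contDiff_const.add (contDiff_id.smul contDiff_const)
        set sv : Set ℝ := (fun t : ℝ => zs + t • v) ⁻¹' (Metric.ball (0:ℂ) R) with hsv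
        have hsvopen : IsOpen sv := Metric.isOpen_ball.preimage hLv.continuous
        have h0sv : (0:ℝ) ∈ sv := by
          simp only [hsv, Set.mem_preimage, zero_smul, add_zero]
          exact hzsB
        have hsvnhds : sv ∈ 𝓝 (0:ℝ) := hsvopen.mem_nhds h0sv
        have hguC2 : ContDiffOn ℝ 2 gu sv := by
          have := huC2.comp hLv.contDiffOn (fun t (ht : t ∈ sv) => ht)
          exact this
        have hgu_at : ∀ t ∈ sv, DifferentiableAt ℝ gu t := by
          intro t ht
          exact (hguC2.differentiableOn (by norm_num)).differentiableAt (hsvopen.mem_nhds ht)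
        have hgu'_diff : DifferentiableAt ℝ (deriv gu) 0 := by
          have hd1 : ContDiffOn ℝ 1 (deriv gu) sv :=
            hguC2.deriv_of_isOpen hsvopen (by norm_num)
          exact (hd1.differentiableOn (by norm_num)).differentiableAt hsvnhds
        have hgw_at : ∀ t : ℝ, DifferentiableAt ℝ gw t := fun t =>
          (hasDerivAt_exp_line N c A B t).differentiableAt
        have hgw'_diff : DifferentiableAt ℝ (deriv gw) 0 := by
          rw [hgw, deriv_exp_line]
          exact (hasDerivAt_exp_line2 N c A B 0).differentiableAt
        have hten : Tendsto (fun t : ℝ => zs + t • v) (𝓝 0) (𝓝 zs) := by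
          have h : Tendsto (fun t : ℝ => zs + t • v) (𝓝 0) (𝓝 (zs + (0:ℝ) • v)) :=
            hLv.continuous.continuousAt
          simpa only [zero_smul, add_zero] using h
        have e1 : ∀ t : ℝ, gw t = w (zs + t • v) := fun t => (congrFun hgweq t).symm
        have hlocg : IsLocalMax (fun t : ℝ => gu t - gw t) 0 := by
          show ∀ᶠ t in 𝓝 (0:ℝ), gu t - gw t ≤ gu 0 - gw 0
          filter_upwards [hten.eventually hloc] with t ht
          rw [e1 t, e1 0]
          simp only [hgu]
          simpa using ht
        have heq2 : deriv (fun t : ℝ => gu t - gw t)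
            =ᶠ[𝓝 (0:ℝ)] fun t => deriv gu t - deriv gw t :=
          eventually_of_mem hsvnhds (fun t ht => deriv_sub (hgu_at t ht) (hgw_at t))
        have htest := second_deriv_test hlocg
          (eventually_of_mem hsvnhds (fun t ht => (hgu_at t ht).sub (hgw_at t)))
          ((hgu'_diff.sub hgw'_diff).congr_of_eventuallyEq heq2)
        have hsplit : deriv (deriv (fun t : ℝ => gu t - gw t)) 0
            = deriv (deriv gu) 0 - deriv (deriv gw) 0 := by
          rw [heq2.deriv_eq]
          exact deriv_sub hgu'_diff hgw'_diff
        have hgw2 : deriv (deriv gw) 0 = c * ∑ k ∈ Finset.range N,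
            B k ^ 2 * Real.exp (A k) := by
          rw [hgw]
          exact deriv2_exp_line N c A B
        rw [hsplit, hgw2] at htest
        linarith
      -- combine the two directions
      have hlap_eq : deriv (deriv (fun t : ℝ => u (zs + t • (1:ℂ)))) 0
          + deriv (deriv (fun t : ℝ => u (zs + t • Complex.I))) 0
          = 8 * Real.sinh (2 * u zs) := by
        have h := hulap zs hzsB
        rw [flatLaplacian, flatLaplacian_line, flatLaplacian_line] at h
        exact h
      have hBsum : ∀ k ∈ Finset.range N,
          (4 * (starRingEnd ℂ) (ξ k) * (1:ℂ)).re ^ 2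
            + (4 * (starRingEnd ℂ) (ξ k) * Complex.I).re ^ 2 = 16 := by
        intro k _
        have habs1 : ‖ξ k‖ = 1 := by
          have hcast : (2 * (Real.pi:ℂ) * k / N * Complex.I)
              = ((2 * Real.pi * k / N : ℝ) : ℂ) * Complex.I := by
            push_cast; ring
          simp only [hξ]
          rw [hcast, Complex.norm_exp]
          simp
        set x : ℂ := 4 * (starRingEnd ℂ) (ξ k) with hx
        have h1 : (x * 1).re ^ 2 + (x * Complex.I).re ^ 2 = Complex.normSq x := by
          rw [mul_one, Complex.mul_I_re, Complex.normSq_apply]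
          ring
        have h2 : Complex.normSq x = 16 := by
          rw [← Complex.sq_norm, hx, norm_mul, Complex.norm_conj, habs1]
          norm_num
        calc (x * 1).re ^ 2 + (x * Complex.I).re ^ 2 = Complex.normSq x := h1
          _ = 16 := h2
      have hwsum : c * ∑ k ∈ Finset.range N,
            (4 * (starRingEnd ℂ) (ξ k) * (1:ℂ)).re ^ 2 * Real.exp (A k)
          + c * ∑ k ∈ Finset.range N,
            (4 * (starRingEnd ℂ) (ξ k) * Complex.I).re ^ 2 * Real.exp (A k)
          = 16 * w zs := by
        rw [← mul_add, ← Finset.sum_add_distrib]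
        have hss : ∑ k ∈ Finset.range N,
            ((4 * (starRingEnd ℂ) (ξ k) * (1:ℂ)).re ^ 2 * Real.exp (A k)
              + (4 * (starRingEnd ℂ) (ξ k) * Complex.I).re ^ 2 * Real.exp (A k))
            = ∑ k ∈ Finset.range N, 16 * Real.exp (A k) := by
          apply Finset.sum_congr rfl
          intro k hk
          rw [← add_mul, hBsum k hk]
        rw [hss, ← Finset.mul_sum]
        simp only [hwdef, hA]
        ring
      have h1 := hdir 1
      have hI := hdir Complex.I
      have husz : 0 < u zs := lt_of_le_of_lt (hwpos zs).le (by linarith)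
      have hsinh : 2 * u zs ≤ Real.sinh (2 * u zs) :=
        Real.self_le_sinh_iff.2 (by linarith)
      have hwzs := hwpos zs
      linarith
  -- conclude
  have hz0cb : z0 ∈ Metric.closedBall z0 d := Metric.mem_closedBall_self hd.le
  have h1 : u z0 ≤ w z0 := key z0 hz0cb
  have hw0 : w z0 = c * N := by
    simp [hwdef, sub_self]
  have habs0 : 0 ≤ u z0 := (hubd z0 (Metric.ball_subset_closedBall hz0)).1
  rw [_root_.abs_of_nonneg habs0]
  calc u z0 ≤ c * N := hw0 ▸ h1
    _ = (N:ℝ) * M * Real.exp (-(b * d)) := by rw [hcdef]; ring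
    _ ≤ (N:ℝ) * M * Real.exp (-γ * d) := by
        apply mul_le_mul_of_nonneg_left _ (by positivity)
        apply Real.exp_le_exp.2
        have h3 := mul_le_mul_of_nonneg_right hγb hd.le
        linarith
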